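/- Let k ≥ 2, let N ≥ 1, let w be a word of length N over Σ_k, and set r = ⌊log_k N⌋. Then w is a generalized de Bruijn word if and only if both γ_r(w) = k^r and γ_{r+1}(w) = N. -/

import Mathlib

/-- `gamma w i` is the number of distinct length-`i` factors of the word `w`
considered as a circular word. -/
def gamma {k : ℕ} (w : List (Fin k)) (i : ℕ) : ℕ :=
  ((Finset.range w.length).image (fun j => ((w ++ w).drop j).take i)).card

/-- A word `w` over `Σ_k` is a generalized de Bruijn word if
`γ_i(w) = min (k^i, |w|)` for all `0 ≤ i ≤ |w|`. -/
def IsGenDeBruijn {k : ℕ} (w : List (Fin k)) : Prop :=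
  ∀ i ≤ w.length, gamma w i = min (k ^ i) w.length

lemma gamma_mono_succ {k : ℕ} (w : List (Fin k)) (i : ℕ) :
    gamma w i ≤ gamma w (i + 1) := by
  unfold gamma
  have h : (Finset.range w.length).image (fun j => ((w ++ w).drop j).take i)
      = ((Finset.range w.length).image
          (fun j => ((w ++ w).drop j).take (i + 1))).image (List.take i) := by
    rw [Finset.image_image]
    apply Finset.image_congr
    intro j _
    simp [List.take_take, Nat.min_eq_left (Nat.le_succ i)]
  rw [h]
  exact Finset.card_image_le

lemma gamma_mono {k : ℕ} (w : List (Fin k)) {a b : ℕ} (hab : a ≤ b) :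
    gamma w a ≤ gamma w b := by
  induction b, hab using Nat.le_induction with
  | base => exact le_rfl
  | succ n hn ih => exact ih.trans (gamma_mono_succ w n)

lemma gamma_le_len {k : ℕ} (w : List (Fin k)) (i : ℕ) :
    gamma w i ≤ w.length := by
  unfold gamma
  exact Finset.card_image_le.trans (by simp)

lemma gamma_zero_le {k : ℕ} (w : List (Fin k)) : gamma w 0 ≤ 1 := by
  unfold gamma
  apply Finset.card_le_one.2
  intro a ha b hb
  simp only [Finset.mem_image, List.take_zero] at ha hb
  obtain ⟨_, _, rfl⟩ := ha
  obtain ⟨_, _, rfl⟩ := hb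
  rfl

lemma gamma_succ_le {k : ℕ} (w : List (Fin k)) (i : ℕ) (hi : i ≤ w.length) :
    gamma w (i + 1) ≤ k * gamma w i := by
  unfold gamma
  have hsub : (Finset.range w.length).image (fun j => ((w ++ w).drop j).take (i + 1)) ⊆
      ((Finset.univ : Finset (Fin k)) ×ˢ
        ((Finset.range w.length).image (fun j => ((w ++ w).drop j).take i))).image
        (fun p : Fin k × List (Fin k) => p.1 :: p.2) := by
    intro s hs
    simp only [Finset.mem_image, Finset.mem_range] at hs
    obtain ⟨j, hj, rfl⟩ := hs
    have hjlen : j < (w ++ w).length := by simp; omega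
    rw [List.drop_eq_getElem_cons hjlen, List.take_succ_cons]
    refine Finset.mem_image.2 ⟨((w ++ w)[j], ((w ++ w).drop (j + 1)).take i), ?_, rfl⟩
    rw [Finset.mem_product]
    refine ⟨Finset.mem_univ _, Finset.mem_image.2 ?_⟩
    by_cases h : j + 1 < w.length
    · exact ⟨j + 1, Finset.mem_range.2 h, rfl⟩
    · refine ⟨0, Finset.mem_range.2 (by omega), ?_⟩
      have hj1 : j + 1 = w.length := by omega
      rw [hj1, List.drop_zero]
      have h2 : (w ++ w).drop w.length = w := by
        simp
      rw [h2, List.take_append_of_le_length hi]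
  calc ((Finset.range w.length).image (fun j => ((w ++ w).drop j).take (i + 1))).card
      ≤ _ := Finset.card_le_card hsub
    _ ≤ _ := Finset.card_image_le
    _ = k * _ := by rw [Finset.card_product, Finset.card_univ, Fintype.card_fin]

lemma gamma_le_pow {k : ℕ} (w : List (Fin k)) : ∀ i, i ≤ w.length → gamma w i ≤ k ^ i := by
  intro i
  induction i with
  | zero => intro _; simpa using gamma_zero_le w
  | succ n ih =>
      intro h
      calc gamma w (n + 1) ≤ k * gamma w n := gamma_succ_le w n (by omega)
        _ ≤ k * k ^ n := Nat.mul_le_mul_left k (ih (by omega))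
        _ = k ^ (n + 1) := by ring

lemma gamma_chain {k : ℕ} (w : List (Fin k)) :
    ∀ d i, i + d ≤ w.length → gamma w (i + d) ≤ k ^ d * gamma w i := by
  intro d
  induction d with
  | zero => intro i _; simp
  | succ n ih =>
      intro i h
      have h1 : gamma w (i + n + 1) ≤ k * gamma w (i + n) :=
        gamma_succ_le w (i + n) (by omega)
      calc gamma w (i + (n + 1)) = gamma w (i + n + 1) := by ring_nf
        _ ≤ k * gamma w (i + n) := h1
        _ ≤ k * (k ^ n * gamma w i) := Nat.mul_le_mul_left k (ih i (by omega))
        _ = k ^ (n + 1) * gamma w i := by ring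

theorem stmt_2 (k N : ℕ) (hk : 2 ≤ k) (hN : 1 ≤ N)
    (w : List (Fin k)) (hw : w.length = N)
    (r : ℕ) (hr : r = Nat.log k N) :
    IsGenDeBruijn w ↔ (gamma w r = k ^ r ∧ gamma w (r + 1) = N) := by
  have hk1 : 1 < k := by omega
  have hpow_le : k ^ r ≤ N := by rw [hr]; exact Nat.pow_log_le_self k (by omega)
  have hlt : N < k ^ (r + 1) := by rw [hr]; exact Nat.lt_pow_succ_log_self hk1 N
  have hrN : r + 1 ≤ N := le_trans (Nat.lt_pow_self hk1 : r < k ^ r) hpow_le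
  constructor
  · intro h
    constructor
    · have := h r (by omega)
      rw [hw] at this
      rw [this, min_eq_left hpow_le]
    · have := h (r + 1) (by omega)
      rw [hw] at this
      rw [this, min_eq_right (le_of_lt hlt)]
  · rintro ⟨h1, h2⟩ i hi
    rw [hw]
    rcases le_or_gt i r with hir | hir
    · have hmin : min (k ^ i) N = k ^ i :=
        min_eq_left (le_trans (Nat.pow_le_pow_right (by omega) hir) hpow_le)
      rw [hmin]
      have hub : gamma w i ≤ k ^ i := gamma_le_pow w i hi
      have hchain : gamma w (i + (r - i)) ≤ k ^ (r - i) * gamma w i :=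
        gamma_chain w (r - i) i (by omega)
      have hri : i + (r - i) = r := by omega
      rw [hri, h1] at hchain
      have hlb : k ^ i ≤ gamma w i := by
        have : k ^ (r - i) * k ^ i ≤ k ^ (r - i) * gamma w i := by
          rw [← pow_add, Nat.add_comm, hri]
          exact hchain
        exact Nat.le_of_mul_le_mul_left this (by positivity)
      omega
    · have hmin : min (k ^ i) N = N :=
        min_eq_right (le_of_lt (lt_of_lt_of_le hlt (Nat.pow_le_pow_right (by omega) hir)))
      rw [hmin]
      have hub : gamma w i ≤ N := hw ▸ gamma_le_len w i
      have hlb : N ≤ gamma w i := h2 ▸ gamma_mono w hir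
      omega
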